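/- Let a : ℝ → ℝ³ be a differentiable trajectory with |a'(t)| < c for all t in [t_min, t_max] where c > 0. Fix a point x ∈ ℝ³ and define the arrival time T(t) = t + c⁻¹|x - a(t)|. Then for any t_l, t_j ∈ [t_min, t_max], T(t_j) > T(t_l) if and only if t_j > t_l. -/

import Mathlib

/-- If the derivative norm is strictly less than `c` on `Icc tmin tmax`, then the
trajectory moves strictly slower than `c`. -/
lemma traj_move_lt (c tmin tmax : ℝ)
    (a : ℝ → EuclideanSpace ℝ (Fin 3))
    (ha : Differentiable ℝ a)
    (hsub : ∀ t ∈ Set.Icc tmin tmax, ‖deriv a t‖ < c)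
    {tl tj : ℝ} (hl : tl ∈ Set.Icc tmin tmax) (hj : tj ∈ Set.Icc tmin tmax)
    (hlt : tl < tj) : ‖a tj - a tl‖ < c * (tj - tl) := by
  have hc : 0 < c := lt_of_le_of_lt (norm_nonneg _) (hsub tl hl)
  by_cases hv : a tj - a tl = 0
  · rw [hv, norm_zero]
    have : 0 < tj - tl := sub_pos.2 hlt
    positivity
  set v : EuclideanSpace ℝ (Fin 3) := a tj - a tl with hvdef
  set u : EuclideanSpace ℝ (Fin 3) := ‖v‖⁻¹ • v with hudef
  have hvn : ‖v‖ ≠ 0 := norm_ne_zero_iff.2 hv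
  have hu : ‖u‖ = 1 := by
    rw [hudef, norm_smul, norm_inv, norm_norm, inv_mul_cancel₀ hvn]
  set g : ℝ → ℝ := fun s => inner ℝ u (a s) with hgdef
  have hg : ∀ t, HasDerivAt g (inner ℝ u (deriv a t)) t := by
    intro t
    exact (innerSL ℝ u).hasFDerivAt.comp_hasDerivAt t (ha t).hasDerivAt
  have hgdiff : Differentiable ℝ g := fun t => (hg t).differentiableAt
  have hderiv : ∀ t, deriv g t = inner ℝ u (deriv a t) := fun t => (hg t).deriv
  have key : g tj - g tl < c * (tj - tl) := by
    apply (convex_Icc tmin tmax).image_sub_lt_mul_sub_of_deriv_lt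
      hgdiff.continuous.continuousOn hgdiff.differentiableOn
      (fun s hs => ?_) tl hl tj hj hlt
    have hs' : s ∈ Set.Icc tmin tmax := interior_subset hs
    calc deriv g s = inner ℝ u (deriv a s) := hderiv s
      _ ≤ ‖u‖ * ‖deriv a s‖ := real_inner_le_norm _ _
      _ = ‖deriv a s‖ := by rw [hu, one_mul]
      _ < c := hsub s hs'
  have hgv : g tj - g tl = ‖v‖ := by
    have : g tj - g tl = inner ℝ u v := by
      rw [hgdef, hvdef]
      simp [inner_sub_right]
    rw [this, hudef, real_inner_smul_left, real_inner_self_eq_norm_sq]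
    field_simp
  rwa [← hgv]

theorem arrival_time_order
    (c tmin tmax : ℝ) (hc : 0 < c)
    (a : ℝ → EuclideanSpace ℝ (Fin 3))
    (ha : Differentiable ℝ a)
    (hsub : ∀ t ∈ Set.Icc tmin tmax, ‖deriv a t‖ < c)
    (x : EuclideanSpace ℝ (Fin 3))
    (T : ℝ → ℝ) (hT : ∀ t, T t = t + c⁻¹ * ‖x - a t‖) :
    ∀ tl ∈ Set.Icc tmin tmax, ∀ tj ∈ Set.Icc tmin tmax,
      (T tj > T tl ↔ tj > tl) := by
  have main : ∀ s ∈ Set.Icc tmin tmax, ∀ t ∈ Set.Icc tmin tmax, s < t → T s < T t := by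
    intro s hs t ht hst
    have hmove : ‖a t - a s‖ < c * (t - s) :=
      traj_move_lt c tmin tmax a ha hsub hs ht hst
    have htri : ‖x - a s‖ - ‖x - a t‖ ≤ ‖a t - a s‖ := by
      have := norm_sub_norm_le (x - a s) (x - a t)
      have heq : (x - a s) - (x - a t) = a t - a s := by abel
      rwa [heq] at this
    have h1 : c⁻¹ * (‖x - a s‖ - ‖x - a t‖) < t - s := by
      have : c⁻¹ * (‖x - a s‖ - ‖x - a t‖) ≤ c⁻¹ * ‖a t - a s‖ :=
        mul_le_mul_of_nonneg_left htri (by positivity)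
      have h2 : c⁻¹ * ‖a t - a s‖ < c⁻¹ * (c * (t - s)) :=
        mul_lt_mul_of_pos_left hmove (by positivity)
      have h3 : c⁻¹ * (c * (t - s)) = t - s := by field_simp
      linarith
    rw [hT s, hT t]
    nlinarith [norm_nonneg (x - a s), norm_nonneg (x - a t)]
  intro tl hl tj hj
  constructor
  · intro h
    by_contra hle
    push_neg at hle
    rcases lt_or_eq_of_le hle with hlt | heq
    · exact absurd h (not_lt.2 (le_of_lt (main tj hj tl hl hlt)))
    · rw [heq] at h; exact lt_irrefl _ h
  · exact fun h => main tl hl tj hj h
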